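/- For α ∈ (1,2) and γ ∈ (1, α+1), ∫_0^∞ ∫_ℝ |G_α(1+s, z) - G_α(s, z)|^γ dz ds < ∞, where G_α is the fractional heat kernel. -/

import Mathlib

open MeasureTheory Real

open Set Filter Topology

open scoped ENNReal

private lemma aux_ye {y : ℝ} (hy : 0 ≤ y) : y * Real.exp (-y) ≤ Real.exp (-(y/2)) := by
  have key : y ≤ Real.exp (y/2) := by
    have h := Real.add_one_le_exp (y/4)
    have h2 : Real.exp (y/2) = Real.exp (y/4) * Real.exp (y/4) := by
      rw [← Real.exp_add]; ring_nf
    nlinarith [Real.exp_nonneg (y/4), sq_nonneg (y/4 - 1)]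
  calc y * Real.exp (-y) ≤ Real.exp (y/2) * Real.exp (-y) := by
        exact mul_le_mul_of_nonneg_right key (Real.exp_nonneg _)
    _ = Real.exp (-(y/2)) := by rw [← Real.exp_add]; ring_nf

private lemma aux_one_sub_exp {y : ℝ} : 1 - Real.exp (-y) ≤ y := by
  have := Real.add_one_le_exp (-y); linarith

private lemma aux_hasDerivAt_exp_rpow {α : ℝ} (hα : 1 ≤ α) (t x : ℝ) :
    HasDerivAt (fun y : ℝ => Real.exp (-t * y ^ α))
      (Real.exp (-t * x ^ α) * (-t * (α * x ^ (α - 1)))) x := by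
  have h1 : HasDerivAt (fun y : ℝ => y ^ α) (α * x ^ (α - 1)) x :=
    Real.hasDerivAt_rpow_const (Or.inr hα)
  exact (h1.const_mul (-t)).exp

private lemma aux_cont_rpow {α : ℝ} (hα : 0 ≤ α) : Continuous (fun x : ℝ => x ^ α) := by
  rw [continuous_iff_continuousAt]
  intro x
  exact Real.continuousAt_rpow_const x α (Or.inr hα)

private lemma aux_integrableOn_exp {α t : ℝ} (hα : 1 ≤ α) (ht : 0 < t) :
    IntegrableOn (fun ξ : ℝ => Real.exp (-t * ξ ^ α)) (Ioi 0) := by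
  have h := integrableOn_rpow_mul_exp_neg_mul_rpow (s := 0) (p := α) (b := t)
    (by norm_num) (by linarith) ht
  refine h.congr_fun (fun x hx => ?_) measurableSet_Ioi
  simp only [Real.rpow_zero, one_mul]

private lemma aux_tendsto_exp_rpow {α t : ℝ} (hα : 1 ≤ α) (ht : 0 < t) :
    Tendsto (fun ξ : ℝ => Real.exp (-t * ξ ^ α)) atTop (𝓝 0) := by
  have h1 : Tendsto (fun ξ : ℝ => -t * ξ ^ α) atTop atBot := by
    apply Tendsto.const_mul_atTop_of_neg (neg_lt_zero.mpr ht)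
    exact tendsto_rpow_atTop (by linarith)
  exact Real.tendsto_exp_atBot.comp h1

private lemma aux_F1 {α s : ℝ} (hα : 1 < α) (hs : 0 < s) :
    IntegrableOn (fun ξ : ℝ => α * ξ ^ (α - 1) * Real.exp (-s * ξ ^ α)) (Ioi 0) ∧
      ∫ ξ in Ioi (0:ℝ), α * ξ ^ (α - 1) * Real.exp (-s * ξ ^ α) = 1 / s := by
  set g' : ℝ → ℝ := fun ξ => α * ξ ^ (α - 1) * Real.exp (-s * ξ ^ α) with hg'
  have hderiv : ∀ x ∈ Ici (0:ℝ), HasDerivAt (fun ξ : ℝ => -(1/s) * Real.exp (-s * ξ ^ α)) (g' x) x := by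
    intro x _
    have h := (aux_hasDerivAt_exp_rpow hα.le s x).const_mul (-(1/s))
    refine h.congr_deriv ?_
    simp only [hg']
    field_simp
  have hpos : ∀ x ∈ Ioi (0:ℝ), 0 ≤ g' x := by
    intro x hx
    have : (0:ℝ) ≤ x ^ (α - 1) := Real.rpow_nonneg (le_of_lt hx) _
    positivity
  have htend : Tendsto (fun ξ : ℝ => -(1/s) * Real.exp (-s * ξ ^ α)) atTop (𝓝 0) := by
    have := (aux_tendsto_exp_rpow hα.le hs).const_mul (-(1/s))
    simpa using this
  constructor
  · exact integrableOn_Ioi_deriv_of_nonneg' hderiv hpos htend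
  · have := integral_Ioi_of_hasDerivAt_of_nonneg' hderiv hpos htend
    rw [this]
    rw [Real.zero_rpow (by positivity : α ≠ 0)]
    simp

private lemma aux_F2 {α s : ℝ} (hα : 1 < α) (hs : 0 < s) :
    IntegrableOn (fun ξ : ℝ => s * α * (ξ ^ α * ξ ^ (α - 1)) * Real.exp (-s * ξ ^ α)) (Ioi 0) ∧
      ∫ ξ in Ioi (0:ℝ), s * α * (ξ ^ α * ξ ^ (α - 1)) * Real.exp (-s * ξ ^ α) = 1 / s := by
  set g' : ℝ → ℝ := fun ξ => s * α * (ξ ^ α * ξ ^ (α - 1)) * Real.exp (-s * ξ ^ α) with hg'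
  have hderiv : ∀ x ∈ Ici (0:ℝ),
      HasDerivAt (fun ξ : ℝ => -(ξ ^ α + 1/s) * Real.exp (-s * ξ ^ α)) (g' x) x := by
    intro x _
    have h1 : HasDerivAt (fun ξ : ℝ => -(ξ ^ α + 1/s)) (-(α * x ^ (α - 1))) x := by
      exact ((Real.hasDerivAt_rpow_const (Or.inr hα.le)).add_const (1/s)).neg
    have h := h1.mul (aux_hasDerivAt_exp_rpow hα.le s x)
    refine h.congr_deriv ?_
    simp only [hg']
    field_simp
    ring
  have hpos : ∀ x ∈ Ioi (0:ℝ), 0 ≤ g' x := by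
    intro x hx
    have h1 : (0:ℝ) ≤ x ^ (α - 1) := Real.rpow_nonneg (le_of_lt hx) _
    have h2 : (0:ℝ) ≤ x ^ α := Real.rpow_nonneg (le_of_lt hx) _
    positivity
  have htend : Tendsto (fun ξ : ℝ => -(ξ ^ α + 1/s) * Real.exp (-s * ξ ^ α)) atTop (𝓝 0) := by
    have h1 : Tendsto (fun ξ : ℝ => ξ ^ α * Real.exp (-s * ξ ^ α)) atTop (𝓝 0) := by
      have hx : Tendsto (fun ξ : ℝ => s * ξ ^ α) atTop atTop :=
        (tendsto_rpow_atTop (by linarith)).const_mul_atTop hs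
      have hy : Tendsto (fun y : ℝ => (1/s) * (y * Real.exp (-y))) atTop (𝓝 0) := by
        have := (tendsto_pow_mul_exp_neg_atTop_nhds_zero 1).const_mul (1/s)
        simpa using this
      have := hy.comp hx
      refine this.congr (fun ξ => ?_)
      simp only [Function.comp]
      field_simp
    have h2 := (aux_tendsto_exp_rpow hα.le hs).const_mul (1/s)
    have h3 := (h1.add h2).neg
    norm_num at h3
    refine h3.congr (fun ξ => ?_)
    ring
  constructor
  · exact integrableOn_Ioi_deriv_of_nonneg' hderiv hpos htend
  · have := integral_Ioi_of_hasDerivAt_of_nonneg' hderiv hpos htend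
    rw [this]
    rw [Real.zero_rpow (by positivity : α ≠ 0)]
    simp

private lemma aux_phi_bound {α s : ℝ} (hα : 1 < α) (hs : 1 ≤ s) {ξ : ℝ} (hξ : 0 ≤ ξ) :
    |Real.exp (-(1+s) * ξ ^ α) - Real.exp (-s * ξ ^ α)| ≤ (1/s) * Real.exp (-(1/2) * ξ ^ α) := by
  set y := ξ ^ α with hy
  have hy0 : 0 ≤ y := Real.rpow_nonneg hξ _
  have hs0 : 0 < s := by linarith
  have hsplit : Real.exp (-(1+s) * y) = Real.exp (-s * y) * Real.exp (-y) := by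
    rw [← Real.exp_add]; ring_nf
  have h1 : |Real.exp (-(1+s) * y) - Real.exp (-s * y)|
      = Real.exp (-s * y) * (1 - Real.exp (-y)) := by
    rw [abs_sub_comm, abs_of_nonneg]
    · rw [hsplit]; ring
    · rw [hsplit]
      nlinarith [Real.exp_pos (-s*y), Real.exp_le_one_iff.mpr (by linarith : -y ≤ 0)]
  rw [h1]
  have h2 : Real.exp (-s * y) * (1 - Real.exp (-y)) ≤ Real.exp (-s*y) * y :=
    mul_le_mul_of_nonneg_left aux_one_sub_exp (Real.exp_nonneg _)
  have h3 : Real.exp (-s*y) * y = (1/s) * ((s*y) * Real.exp (-(s*y))) := by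
    field_simp
  have h4 : (s*y) * Real.exp (-(s*y)) ≤ Real.exp (-(s*y/2)) := by
    have := aux_ye (y := s*y) (by positivity)
    convert this using 3 <;> ring
  have h5 : Real.exp (-(s*y/2)) ≤ Real.exp (-(1/2) * y) := by
    apply Real.exp_le_exp.mpr
    nlinarith
  calc Real.exp (-s * y) * (1 - Real.exp (-y)) ≤ Real.exp (-s*y) * y := h2
    _ = (1/s) * ((s*y) * Real.exp (-(s*y))) := h3
    _ ≤ (1/s) * Real.exp (-(s*y/2)) := by
        apply mul_le_mul_of_nonneg_left h4 (by positivity)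
    _ ≤ (1/s) * Real.exp (-(1/2) * y) := by
        apply mul_le_mul_of_nonneg_left h5 (by positivity)

private lemma aux_Linf {α s : ℝ} (hα : 1 < α) (hs : 1 ≤ s) (z : ℝ) :
    |∫ ξ in Ioi (0:ℝ), (Real.exp (-(1+s) * ξ ^ α) - Real.exp (-s * ξ ^ α)) * Real.cos (ξ * z)|
      ≤ (1/s) * ∫ ξ in Ioi (0:ℝ), Real.exp (-(1/2) * ξ ^ α) := by
  have hs0 : 0 < s := by linarith
  have hgint : Integrable (fun ξ : ℝ => (1/s) * Real.exp (-(1/2) * ξ ^ α))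
      (volume.restrict (Ioi 0)) :=
    (aux_integrableOn_exp hα.le (by norm_num)).const_mul _
  have hbd : ∀ᵐ ξ ∂(volume.restrict (Ioi (0:ℝ))),
      ‖(Real.exp (-(1+s) * ξ ^ α) - Real.exp (-s * ξ ^ α)) * Real.cos (ξ * z)‖
        ≤ (1/s) * Real.exp (-(1/2) * ξ ^ α) := by
    rw [ae_restrict_iff' measurableSet_Ioi]
    refine ae_of_all _ (fun ξ hξ => ?_)
    rw [norm_mul]
    calc ‖Real.exp (-(1+s) * ξ ^ α) - Real.exp (-s * ξ ^ α)‖ * ‖Real.cos (ξ * z)‖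
        ≤ ((1/s) * Real.exp (-(1/2) * ξ ^ α)) * 1 := by
          apply mul_le_mul (aux_phi_bound hα hs (le_of_lt hξ))
            (by rw [Real.norm_eq_abs]; exact Real.abs_cos_le_one _) (norm_nonneg _)
            (by positivity)
      _ = (1/s) * Real.exp (-(1/2) * ξ ^ α) := mul_one _
  have := norm_integral_le_of_norm_le hgint hbd
  rw [Real.norm_eq_abs] at this
  calc |∫ ξ in Ioi (0:ℝ), (Real.exp (-(1+s) * ξ ^ α) - Real.exp (-s * ξ ^ α)) * Real.cos (ξ * z)|
      ≤ ∫ ξ in Ioi (0:ℝ), (1/s) * Real.exp (-(1/2) * ξ ^ α) := this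
    _ = (1/s) * ∫ ξ in Ioi (0:ℝ), Real.exp (-(1/2) * ξ ^ α) := integral_const_mul _ _

private lemma aux_phi'_bound {α s : ℝ} (hα : 1 < α) (hs : 1 ≤ s) {ξ : ℝ} (hξ : 0 ≤ ξ) :
    |Real.exp (-(1+s) * ξ ^ α) * (-(1+s) * (α * ξ ^ (α - 1)))
      - Real.exp (-s * ξ ^ α) * (-s * (α * ξ ^ (α - 1)))|
    ≤ α * ξ ^ (α-1) * Real.exp (-s * ξ ^ α)
      + s * α * (ξ ^ α * ξ ^ (α-1)) * Real.exp (-s * ξ ^ α) := by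
  set y := ξ ^ α with hy
  set a := ξ ^ (α - 1) with ha
  have hy0 : 0 ≤ y := Real.rpow_nonneg hξ _
  have ha0 : 0 ≤ a := Real.rpow_nonneg hξ _
  have hα0 : 0 < α := by linarith
  set A := Real.exp (-s * y) with hA
  set B := Real.exp (-y) with hB
  have hA0 : 0 < A := Real.exp_pos _
  have hB0 : 0 < B := Real.exp_pos _
  have hB1 : B ≤ 1 := Real.exp_le_one_iff.mpr (by linarith)
  have h1B : 1 - B ≤ y := aux_one_sub_exp
  have hsplit : Real.exp (-(1+s) * y) = A * B := by
    rw [hA, hB, ← Real.exp_add]; ring_nf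
  rw [hsplit]
  have key : |A * B * (-(1+s) * (α * a)) - A * (-s * (α * a))|
      = (α * a * A) * |s - (1+s) * B| := by
    rw [show A * B * (-(1+s) * (α * a)) - A * (-s * (α * a))
        = (α * a * A) * (s - (1+s) * B) by ring, abs_mul, abs_of_nonneg (by positivity)]
  rw [key]
  have hbnd : |s - (1+s) * B| ≤ 1 + s * y := by
    rw [abs_le]
    constructor <;> nlinarith
  calc (α * a * A) * |s - (1+s) * B| ≤ (α * a * A) * (1 + s * y) :=
        mul_le_mul_of_nonneg_left hbnd (by positivity)
    _ = α * a * A + s * α * (y * a) * A := by ring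

private lemma aux_decay {α s z : ℝ} (hα : 1 < α) (hs : 1 ≤ s) (hz : z ≠ 0) :
    |∫ ξ in Ioi (0:ℝ), (Real.exp (-(1+s) * ξ ^ α) - Real.exp (-s * ξ ^ α)) * Real.cos (ξ * z)|
      ≤ 2 / s * |z|⁻¹ := by
  have hs0 : 0 < s := by linarith
  have hs1 : 0 < 1 + s := by linarith
  set φ : ℝ → ℝ := fun ξ => Real.exp (-(1+s) * ξ ^ α) - Real.exp (-s * ξ ^ α) with hφ
  set φ' : ℝ → ℝ := fun ξ => Real.exp (-(1+s) * ξ ^ α) * (-(1+s) * (α * ξ ^ (α - 1)))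
      - Real.exp (-s * ξ ^ α) * (-s * (α * ξ ^ (α - 1))) with hφ'
  set u : ℝ → ℝ := fun ξ => α * ξ ^ (α-1) * Real.exp (-s * ξ ^ α)
      + s * α * (ξ ^ α * ξ ^ (α-1)) * Real.exp (-s * ξ ^ α) with hu
  have hu_int : IntegrableOn u (Ioi 0) := ((aux_F1 hα hs0).1).add ((aux_F2 hα hs0).1)
  have hu_val : ∫ ξ in Ioi (0:ℝ), u ξ = 2 / s := by
    rw [hu]
    rw [integral_add (aux_F1 hα hs0).1 (aux_F2 hα hs0).1, (aux_F1 hα hs0).2,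
      (aux_F2 hα hs0).2]
    ring
  have hφderiv : ∀ x : ℝ, HasDerivAt φ (φ' x) x := fun x =>
    (aux_hasDerivAt_exp_rpow hα.le (1+s) x).sub (aux_hasDerivAt_exp_rpow hα.le s x)
  -- continuity facts
  have hcont_a : Continuous (fun ξ : ℝ => ξ ^ (α - 1)) := aux_cont_rpow (by linarith)
  have hcont_y : Continuous (fun ξ : ℝ => ξ ^ α) := aux_cont_rpow (by linarith)
  have hcont_φ' : Continuous φ' := by
    rw [hφ']
    fun_prop
  -- integrability of the two pieces
  have hint1 : IntegrableOn (fun ξ : ℝ => φ' ξ * Real.sin (ξ * z) * z⁻¹) (Ioi 0) := by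
    apply Integrable.mono' (hu_int.const_mul |z|⁻¹)
    · apply Continuous.aestronglyMeasurable
      fun_prop
    · rw [ae_restrict_iff' measurableSet_Ioi]
      refine ae_of_all _ (fun ξ hξ => ?_)
      rw [norm_mul, norm_mul]
      have hu0 : 0 ≤ u ξ := by
        have h1 : (0:ℝ) ≤ ξ ^ (α-1) := Real.rpow_nonneg (le_of_lt hξ) _
        have h2 : (0:ℝ) ≤ ξ ^ α := Real.rpow_nonneg (le_of_lt hξ) _
        rw [hu]; positivity
      calc ‖φ' ξ‖ * ‖Real.sin (ξ * z)‖ * ‖(z⁻¹ : ℝ)‖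
          ≤ u ξ * 1 * |z|⁻¹ := by
            apply mul_le_mul _ (by rw [Real.norm_eq_abs, abs_inv])
              (norm_nonneg _) (by linarith [hu0])
            apply mul_le_mul (aux_phi'_bound hα hs (le_of_lt hξ))
              (by rw [Real.norm_eq_abs]; exact Real.abs_sin_le_one _) (norm_nonneg _)
            have h1 : (0:ℝ) ≤ ξ ^ (α-1) := Real.rpow_nonneg (le_of_lt hξ) _
            have h2 : (0:ℝ) ≤ ξ ^ α := Real.rpow_nonneg (le_of_lt hξ) _
            positivity
        _ = |z|⁻¹ * u ξ := by ring
  have hint2 : IntegrableOn (fun ξ : ℝ => φ ξ * Real.cos (ξ * z)) (Ioi 0) := by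
    apply Integrable.mono' ((aux_integrableOn_exp hα.le hs0).const_mul 2)
    · apply Continuous.aestronglyMeasurable
      fun_prop
    · rw [ae_restrict_iff' measurableSet_Ioi]
      refine ae_of_all _ (fun ξ hξ => ?_)
      rw [norm_mul]
      have hb1 : Real.exp (-(1+s) * ξ ^ α) ≤ Real.exp (-s * ξ ^ α) := by
        apply Real.exp_le_exp.mpr
        have : (0:ℝ) ≤ ξ ^ α := Real.rpow_nonneg (le_of_lt hξ) _
        nlinarith
      calc ‖φ ξ‖ * ‖Real.cos (ξ * z)‖ ≤ ‖φ ξ‖ * 1 :=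
            mul_le_mul_of_nonneg_left
              (by rw [Real.norm_eq_abs]; exact Real.abs_cos_le_one _) (norm_nonneg _)
        _ ≤ 2 * Real.exp (-s * ξ ^ α) := by
            rw [mul_one, Real.norm_eq_abs, abs_sub_comm, abs_of_nonneg (by linarith)]
            have := Real.exp_pos (-(1+s) * ξ ^ α)
            linarith
  -- the IBP identity
  set H : ℝ → ℝ := fun ξ => φ ξ * Real.sin (ξ * z) * z⁻¹ with hH
  have hHderiv : ∀ x ∈ Ici (0:ℝ),
      HasDerivAt H (φ' x * Real.sin (x * z) * z⁻¹ + φ x * Real.cos (x * z)) x := by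
    intro x _
    have h2 : HasDerivAt (fun ξ : ℝ => Real.sin (ξ * z)) (Real.cos (x * z) * z) x := by
      simpa using (((hasDerivAt_id x).mul_const z).sin)
    have h := ((hφderiv x).mul h2).mul_const z⁻¹
    refine h.congr_deriv ?_
    field_simp
  have hHtend : Tendsto H atTop (𝓝 0) := by
    apply squeeze_zero_norm (a := fun ξ =>
      (Real.exp (-(1+s) * ξ ^ α) + Real.exp (-s * ξ ^ α)) * |z|⁻¹)
    · intro ξ
      rw [hH]
      simp only [norm_mul, Real.norm_eq_abs]
      calc |φ ξ| * |Real.sin (ξ * z)| * |z⁻¹|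
          ≤ (Real.exp (-(1+s) * ξ ^ α) + Real.exp (-s * ξ ^ α)) * 1 * |z|⁻¹ := by
            apply mul_le_mul _ (by rw [abs_inv]) (abs_nonneg _) (by positivity)
            apply mul_le_mul _ (Real.abs_sin_le_one _) (abs_nonneg _) (by positivity)
            rw [hφ]
            calc |Real.exp (-(1+s) * ξ ^ α) - Real.exp (-s * ξ ^ α)|
                ≤ |Real.exp (-(1+s) * ξ ^ α)| + |Real.exp (-s * ξ ^ α)| := abs_sub _ _
              _ = Real.exp (-(1+s) * ξ ^ α) + Real.exp (-s * ξ ^ α) := by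
                  rw [abs_of_pos (Real.exp_pos _), abs_of_pos (Real.exp_pos _)]
        _ = (Real.exp (-(1+s) * ξ ^ α) + Real.exp (-s * ξ ^ α)) * |z|⁻¹ := by ring
    · have := ((aux_tendsto_exp_rpow hα.le hs1).add
        (aux_tendsto_exp_rpow hα.le hs0)).mul_const |z|⁻¹
      simpa using this
  have hibp : ∫ ξ in Ioi (0:ℝ), (φ' ξ * Real.sin (ξ * z) * z⁻¹ + φ ξ * Real.cos (ξ * z)) = 0 := by
    rw [integral_Ioi_of_hasDerivAt_of_tendsto' hHderiv (hint1.add hint2) hHtend]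
    simp [hH, hφ]
  have hsplit : ∫ ξ in Ioi (0:ℝ), φ ξ * Real.cos (ξ * z)
      = -∫ ξ in Ioi (0:ℝ), φ' ξ * Real.sin (ξ * z) * z⁻¹ := by
    have := integral_add hint1 hint2
    rw [hibp] at this
    linarith [this]
  rw [show (fun ξ => (Real.exp (-(1+s) * ξ ^ α) - Real.exp (-s * ξ ^ α)) * Real.cos (ξ * z))
    = fun ξ => φ ξ * Real.cos (ξ * z) from rfl]
  rw [hsplit, abs_neg]
  have hbd : |∫ ξ in Ioi (0:ℝ), φ' ξ * Real.sin (ξ * z) * z⁻¹|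
      ≤ ∫ ξ in Ioi (0:ℝ), |z|⁻¹ * u ξ := by
    rw [← Real.norm_eq_abs]
    apply norm_integral_le_of_norm_le (hu_int.const_mul |z|⁻¹)
    rw [ae_restrict_iff' measurableSet_Ioi]
    refine ae_of_all _ (fun ξ hξ => ?_)
    rw [norm_mul, norm_mul]
    have hu0 : 0 ≤ u ξ := by
      have h1 : (0:ℝ) ≤ ξ ^ (α-1) := Real.rpow_nonneg (le_of_lt hξ) _
      have h2 : (0:ℝ) ≤ ξ ^ α := Real.rpow_nonneg (le_of_lt hξ) _
      rw [hu]; positivity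
    calc ‖φ' ξ‖ * ‖Real.sin (ξ * z)‖ * ‖(z⁻¹:ℝ)‖ ≤ u ξ * 1 * |z|⁻¹ := by
          apply mul_le_mul _ (by rw [Real.norm_eq_abs, abs_inv]) (norm_nonneg _)
            (by linarith [hu0])
          apply mul_le_mul (aux_phi'_bound hα hs (le_of_lt hξ))
            (by rw [Real.norm_eq_abs]; exact Real.abs_sin_le_one _) (norm_nonneg _)
          have h1 : (0:ℝ) ≤ ξ ^ (α-1) := Real.rpow_nonneg (le_of_lt hξ) _
          have h2 : (0:ℝ) ≤ ξ ^ α := Real.rpow_nonneg (le_of_lt hξ) _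
          positivity
      _ = |z|⁻¹ * u ξ := by ring
  calc |∫ ξ in Ioi (0:ℝ), φ' ξ * Real.sin (ξ * z) * z⁻¹|
      ≤ ∫ ξ in Ioi (0:ℝ), |z|⁻¹ * u ξ := hbd
    _ = |z|⁻¹ * (2/s) := by rw [integral_const_mul, hu_val]
    _ = 2 / s * |z|⁻¹ := by ring

private lemma aux_int_cos {α t : ℝ} (hα : 1 < α) (ht : 0 < t) (z : ℝ) :
    IntegrableOn (fun ξ : ℝ => Real.exp (-t * ξ ^ α) * Real.cos (ξ * z)) (Ioi 0) := by
  have hcont_y : Continuous (fun ξ : ℝ => ξ ^ α) := aux_cont_rpow (by linarith)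
  apply Integrable.mono' (aux_integrableOn_exp hα.le ht)
  · apply Continuous.aestronglyMeasurable
    fun_prop
  · refine ae_of_all _ (fun ξ => ?_)
    rw [norm_mul]
    calc ‖Real.exp (-t * ξ ^ α)‖ * ‖Real.cos (ξ * z)‖ ≤ ‖Real.exp (-t * ξ ^ α)‖ * 1 :=
          mul_le_mul_of_nonneg_left
            (by rw [Real.norm_eq_abs]; exact Real.abs_cos_le_one _) (norm_nonneg _)
      _ = Real.exp (-t * ξ ^ α) := by
          rw [mul_one, Real.norm_eq_abs, abs_of_pos (Real.exp_pos _)]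

private lemma aux_jb_integrable {α : ℝ} (hα : 1 < α) :
    Integrable (fun u : ℝ => (1 + |u| ^ (1 + α))⁻¹) := by
  have h1α : (0:ℝ) ≤ 1 + α := by linarith
  have hcont : Continuous (fun u : ℝ => (1 + |u| ^ (1 + α))⁻¹) := by
    apply (continuous_const.add ((aux_cont_rpow h1α).comp continuous_abs)).inv₀
    intro x
    have : (0:ℝ) ≤ |x| ^ (1 + α) := Real.rpow_nonneg (abs_nonneg _) _
    simp only [Pi.add_apply, Function.comp_apply]
    positivity
  have hbase : Integrable (fun u : ℝ => (1 + ‖u‖) ^ (-(1 + α)) * (2:ℝ) ^ (1 + α)) := by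
    apply Integrable.mul_const
    apply integrable_one_add_norm (E := ℝ)
    simp only [Module.finrank_self]
    norm_num
    linarith
  apply Integrable.mono' hbase hcont.aestronglyMeasurable
  refine ae_of_all _ (fun u => ?_)
  have hu : (0:ℝ) ≤ |u| ^ (1 + α) := Real.rpow_nonneg (abs_nonneg _) _
  have h2 : (0:ℝ) < 1 + |u| ^ (1 + α) := by positivity
  have habs : (0:ℝ) < 1 + |u| := by positivity
  rw [Real.norm_eq_abs, abs_of_pos (by positivity), Real.norm_eq_abs,
    Real.rpow_neg habs.le]
  -- goal: (1 + |u| ^ (1+α))⁻¹ ≤ ((1+|u|) ^ (1+α))⁻¹ * 2 ^ (1+α)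
  have key : (1 + |u|) ^ (1 + α) ≤ 2 ^ (1 + α) * (1 + |u| ^ (1 + α)) := by
    rcases le_total (|u|) 1 with h | h
    · calc (1 + |u|) ^ (1 + α) ≤ (2:ℝ) ^ (1 + α) :=
            Real.rpow_le_rpow (by positivity) (by linarith) h1α
        _ ≤ 2 ^ (1 + α) * (1 + |u| ^ (1 + α)) := by
            nlinarith [Real.rpow_nonneg (by norm_num : (0:ℝ) ≤ 2) (1 + α), hu]
    · calc (1 + |u|) ^ (1 + α) ≤ (2 * |u|) ^ (1 + α) :=
            Real.rpow_le_rpow (by positivity) (by linarith) h1α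
        _ = 2 ^ (1 + α) * |u| ^ (1 + α) := Real.mul_rpow (by norm_num) (abs_nonneg _)
        _ ≤ 2 ^ (1 + α) * (1 + |u| ^ (1 + α)) := by
            nlinarith [Real.rpow_nonneg (by norm_num : (0:ℝ) ≤ 2) (1 + α)]
  have hpow : (0:ℝ) < (1 + |u|) ^ (1 + α) := Real.rpow_pos_of_pos habs _
  have h2p : (0:ℝ) < 2 ^ (1 + α) := Real.rpow_pos_of_pos (by norm_num) _
  have h3 : ((2:ℝ) ^ (1 + α) * (1 + |u| ^ (1 + α)))⁻¹ ≤ ((1 + |u|) ^ (1 + α))⁻¹ :=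
    inv_anti₀ hpow key
  have h4 : (1 + |u| ^ (1 + α))⁻¹ = ((2:ℝ) ^ (1 + α) * (1 + |u| ^ (1 + α)))⁻¹ * 2 ^ (1 + α) := by
    field_simp
  rw [h4]
  exact mul_le_mul_of_nonneg_right h3 h2p.le

private lemma aux_lintegral_scale {a : ℝ} (ha : a ≠ 0) (f : ℝ → ENNReal) (hf : Measurable f) :
    ∫⁻ x : ℝ, f (a * x) = ENNReal.ofReal |a⁻¹| * ∫⁻ x, f x := by
  rw [← smul_eq_mul, ← lintegral_smul_measure, ← Real.map_volume_mul_left ha,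
    lintegral_map hf (measurable_const_mul a)]

/-- For `α ∈ (1,2)` and `γ ∈ (1, α+1)`, with `G` the fractional heat kernel
(given via the inverse Fourier formula, with scaling property and decay bound),
`∫_0^∞ ∫_ℝ |G(1+s, z) - G(s, z)|^γ dz ds < ∞`. -/
theorem temporal_increment_kernel_integrable
    (α γ : ℝ) (hα1 : 1 < α) (hα2 : α < 2)
    (hγ1 : 1 < γ) (hγ2 : γ < α + 1)
    (G : ℝ → ℝ → ℝ)
    (hG : ∀ t > (0 : ℝ), ∀ x : ℝ,
      G t x = (1 / (2 * Real.pi)) * ∫ ξ : ℝ, Real.exp (-t * |ξ| ^ α) * Real.cos (ξ * x))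
    (hscaling : ∀ t > (0 : ℝ), ∀ x : ℝ,
      G t x = t ^ (-(1 / α)) * G 1 (x * t ^ (-(1 / α))))
    (hdecay : ∃ C : ℝ, 0 < C ∧ ∀ x : ℝ, |G 1 x| ≤ C * (1 + |x| ^ (1 + α))⁻¹) :
    (∫⁻ s in Set.Ioi (0 : ℝ), ∫⁻ z : ℝ,
        ENNReal.ofReal (|G (1 + s) z - G s z| ^ γ)) < ⊤ := by
  obtain ⟨C, hC, hCb⟩ := hdecay
  have hα0 : (0:ℝ) < α := by linarith
  have hγ0 : (0:ℝ) < γ := by linarith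
  have hπ : (0:ℝ) < Real.pi := Real.pi_pos
  set c : ℝ := (γ - 1) / α with hc
  have hc0 : 0 ≤ c := by rw [hc]; apply div_nonneg <;> linarith
  have hc1 : c < 1 := by rw [hc, div_lt_one hα0]; linarith
  -- continuity of the japanese bracket
  have h1α : (0:ℝ) ≤ 1 + α := by linarith
  have hcont_jb : Continuous (fun u : ℝ => (1 + |u| ^ (1 + α))⁻¹) := by
    apply (continuous_const.add ((aux_cont_rpow h1α).comp continuous_abs)).inv₀
    intro x
    have : (0:ℝ) ≤ |x| ^ (1 + α) := Real.rpow_nonneg (abs_nonneg _) _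
    simp only [Pi.add_apply, Function.comp_apply]
    positivity
  -- the two basic finite lintegrals
  set J : ℝ≥0∞ := ∫⁻ u : ℝ, ENNReal.ofReal ((1 + |u| ^ (1 + α))⁻¹) with hJ
  have hJfin : J < ⊤ := (aux_jb_integrable hα1).lintegral_lt_top
  set J2 : ℝ≥0∞ := ∫⁻ z : ℝ, ENNReal.ofReal ((1 + |z|) ^ (-γ)) with hJ2
  have hJ2fin : J2 < ⊤ := by
    have h : Integrable (fun z : ℝ => (1 + ‖z‖) ^ (-γ)) :=
      integrable_one_add_norm (by simpa using hγ1)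
    simp_rw [Real.norm_eq_abs] at h
    exact h.lintegral_lt_top
  -- reduction of the kernel to an integral over (0,∞)
  have hint_cos : ∀ t : ℝ, 0 < t → ∀ x : ℝ,
      IntegrableOn (fun ξ : ℝ => Real.exp (-t * ξ ^ α) * Real.cos (ξ * x)) (Ioi 0) :=
    fun t ht x => aux_int_cos hα1 ht x
  have Gform : ∀ t : ℝ, 0 < t → ∀ x : ℝ,
      G t x = (1 / Real.pi) * ∫ ξ in Ioi (0:ℝ), Real.exp (-t * ξ ^ α) * Real.cos (ξ * x) := by
    intro t ht x
    rw [hG t ht x]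
    have heq : (fun ξ : ℝ => Real.exp (-t * |ξ| ^ α) * Real.cos (ξ * x))
        = fun ξ : ℝ => Real.exp (-t * |ξ| ^ α) * Real.cos (|ξ| * x) := by
      funext ξ
      congr 1
      rcases abs_choice ξ with h | h
      · rw [h]
      · rw [h, neg_mul, Real.cos_neg]
    rw [heq,
      integral_comp_abs (f := fun r => Real.exp (-t * r ^ α) * Real.cos (r * x))]
    field_simp
    ring_nf
    congr 1
    ext ξ
    ring
  have Dform : ∀ s : ℝ, 0 < s → ∀ z : ℝ,
      G (1 + s) z - G s z = (1 / Real.pi) *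
        ∫ ξ in Ioi (0:ℝ),
          (Real.exp (-(1+s) * ξ ^ α) - Real.exp (-s * ξ ^ α)) * Real.cos (ξ * z) := by
    intro s hs z
    rw [Gform (1+s) (by linarith) z, Gform s hs z, ← mul_sub]
    congr 1
    rw [← integral_sub (hint_cos (1+s) (by linarith) z) (hint_cos s hs z)]
    refine setIntegral_congr_fun measurableSet_Ioi (fun ξ _ => ?_)
    ring
  -- constants for the large-time bound
  set Ihalf : ℝ := ∫ ξ in Ioi (0:ℝ), Real.exp (-(1/2) * ξ ^ α) with hIhalf
  have hIhalf0 : 0 ≤ Ihalf :=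
    setIntegral_nonneg measurableSet_Ioi (fun ξ _ => (Real.exp_pos _).le)
  set M : ℝ := max ((1/Real.pi) * Ihalf) (2/Real.pi) with hM
  have hM0 : (0:ℝ) < M := lt_max_of_lt_right (by positivity)
  -- the pointwise large-time bound
  have hDlarge : ∀ s : ℝ, 1 ≤ s → ∀ z : ℝ,
      |G (1 + s) z - G s z| ≤ 2 * M * (s⁻¹ * (1 + |z|)⁻¹) := by
    intro s hs z
    have hs0 : (0:ℝ) < s := by linarith
    have hz2 : (0:ℝ) < 1 + |z| := by positivity
    rw [Dform s hs0 z, abs_mul, abs_of_pos (by positivity : (0:ℝ) < 1/Real.pi)]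
    rcases le_total (|z|) 1 with hz | hz
    · have h1 := aux_Linf (s := s) (z := z) hα1 hs
      have hB : (1:ℝ) ≤ 2 * (1 + |z|)⁻¹ := by
        rw [← div_eq_mul_inv, le_div_iff₀ hz2]; linarith
      calc (1/Real.pi) * |∫ ξ in Ioi (0:ℝ),
            (Real.exp (-(1+s) * ξ ^ α) - Real.exp (-s * ξ ^ α)) * Real.cos (ξ * z)|
          ≤ (1/Real.pi) * ((1/s) * Ihalf) :=
            mul_le_mul_of_nonneg_left h1 (by positivity)
        _ = ((1/Real.pi) * Ihalf) * s⁻¹ * 1 := by ring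
        _ ≤ M * s⁻¹ * (2 * (1 + |z|)⁻¹) := by
            apply mul_le_mul
              (mul_le_mul_of_nonneg_right (le_max_left _ _) (by positivity)) hB
              one_pos.le
            exact mul_nonneg hM0.le (by positivity)
        _ = 2 * M * (s⁻¹ * (1 + |z|)⁻¹) := by ring
    · have hz0 : (0:ℝ) < |z| := by linarith
      have hzne : z ≠ 0 := by
        intro h; rw [h, abs_zero] at hz0; exact lt_irrefl _ hz0
      have h1 := aux_decay (s := s) (z := z) hα1 hs hzne
      have hinv : |z|⁻¹ ≤ 2 * (1 + |z|)⁻¹ := by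
        rw [← div_eq_mul_inv, inv_eq_one_div, div_le_div_iff₀ hz0 hz2]; linarith
      calc (1/Real.pi) * |∫ ξ in Ioi (0:ℝ),
            (Real.exp (-(1+s) * ξ ^ α) - Real.exp (-s * ξ ^ α)) * Real.cos (ξ * z)|
          ≤ (1/Real.pi) * (2 / s * |z|⁻¹) :=
            mul_le_mul_of_nonneg_left h1 (by positivity)
        _ = (2/Real.pi) * s⁻¹ * |z|⁻¹ := by ring
        _ ≤ M * s⁻¹ * (2 * (1 + |z|)⁻¹) := by
            apply mul_le_mul
              (mul_le_mul_of_nonneg_right (le_max_right _ _) (by positivity)) hinv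
              (by positivity)
            exact mul_nonneg hM0.le (by positivity)
        _ = 2 * M * (s⁻¹ * (1 + |z|)⁻¹) := by ring
  -- the scaling bound
  set bnd : ℝ → ℝ → ℝ := fun t z =>
    (t ^ (-(1/α))) ^ γ * C ^ γ * (1 + |t ^ (-(1/α)) * z| ^ (1 + α))⁻¹ with hbnd
  have hbnd0 : ∀ t z : ℝ, 0 < t → 0 ≤ bnd t z := by
    intro t z ht
    have h1 : (0:ℝ) ≤ (t ^ (-(1/α))) ^ γ :=
      Real.rpow_nonneg (Real.rpow_nonneg ht.le _) _
    have h2 : (0:ℝ) ≤ |t ^ (-(1/α)) * z| ^ (1 + α) := Real.rpow_nonneg (abs_nonneg _) _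
    have h3 : (0:ℝ) ≤ C ^ γ := Real.rpow_nonneg hC.le _
    rw [hbnd]
    positivity
  have hGbnd : ∀ t : ℝ, 0 < t → ∀ z : ℝ, |G t z| ^ γ ≤ bnd t z := by
    intro t ht z
    set a : ℝ := t ^ (-(1/α)) with ha
    have ha0 : (0:ℝ) < a := Real.rpow_pos_of_pos ht _
    have h1 : |G t z| = a * |G 1 (z * a)| := by
      rw [hscaling t ht z, abs_mul, abs_of_pos ha0]
    have h2 : |G t z| ≤ a * (C * (1 + |z * a| ^ (1 + α))⁻¹) := by
      rw [h1]
      exact mul_le_mul_of_nonneg_left (hCb (z * a)) ha0.le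
    have hw : (0:ℝ) ≤ |z * a| ^ (1 + α) := Real.rpow_nonneg (abs_nonneg _) _
    have hwpos : (0:ℝ) < 1 + |z * a| ^ (1 + α) := by positivity
    calc |G t z| ^ γ ≤ (a * (C * (1 + |z * a| ^ (1 + α))⁻¹)) ^ γ :=
          Real.rpow_le_rpow (abs_nonneg _) h2 hγ0.le
      _ = a ^ γ * C ^ γ * ((1 + |z * a| ^ (1 + α))⁻¹) ^ γ := by
          rw [Real.mul_rpow ha0.le (by positivity), Real.mul_rpow hC.le (by positivity)]
          ring
      _ ≤ a ^ γ * C ^ γ * ((1 + |z * a| ^ (1 + α))⁻¹) ^ (1:ℝ) := by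
          apply mul_le_mul_of_nonneg_left
            (Real.rpow_le_rpow_of_exponent_ge (by positivity)
              (by rw [inv_le_one_iff₀]; right; linarith) hγ1.le)
          exact mul_nonneg (Real.rpow_nonneg ha0.le _) (Real.rpow_nonneg hC.le _)
      _ = bnd t z := by
          rw [Real.rpow_one, hbnd, mul_comm z a]
  have hmeas_bnd : ∀ t : ℝ, Measurable fun z => ENNReal.ofReal (bnd t z) := by
    intro t
    apply Measurable.ennreal_ofReal
    apply Continuous.measurable
    exact continuous_const.mul (hcont_jb.comp (continuous_const.mul continuous_id))
  have hbnd_int : ∀ t : ℝ, 0 < t →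
      ∫⁻ z : ℝ, ENNReal.ofReal (bnd t z)
        = ENNReal.ofReal (C ^ γ) * ENNReal.ofReal (t ^ (-c)) * J := by
    intro t ht
    set a : ℝ := t ^ (-(1/α)) with ha
    have ha0 : (0:ℝ) < a := Real.rpow_pos_of_pos ht _
    have hmeas_h : Measurable fun u : ℝ => ENNReal.ofReal ((1 + |u| ^ (1 + α))⁻¹) :=
      hcont_jb.measurable.ennreal_ofReal
    have step1 : ∀ z : ℝ, ENNReal.ofReal (bnd t z)
        = ENNReal.ofReal (a ^ γ * C ^ γ) *
            (fun u : ℝ => ENNReal.ofReal ((1 + |u| ^ (1 + α))⁻¹)) (a * z) := by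
      intro z
      rw [hbnd]
      simp only
      rw [ENNReal.ofReal_mul (by positivity)]
    calc ∫⁻ z : ℝ, ENNReal.ofReal (bnd t z)
        = ∫⁻ z : ℝ, ENNReal.ofReal (a ^ γ * C ^ γ) *
            (fun u : ℝ => ENNReal.ofReal ((1 + |u| ^ (1 + α))⁻¹)) (a * z) := by
          exact lintegral_congr step1
      _ = ENNReal.ofReal (a ^ γ * C ^ γ) *
            ∫⁻ z : ℝ, (fun u : ℝ => ENNReal.ofReal ((1 + |u| ^ (1 + α))⁻¹)) (a * z) :=
          lintegral_const_mul' _ _ ENNReal.ofReal_ne_top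
      _ = ENNReal.ofReal (a ^ γ * C ^ γ) * (ENNReal.ofReal |a⁻¹| * J) := by
          rw [aux_lintegral_scale ha0.ne' _ hmeas_h, hJ]
      _ = ENNReal.ofReal (C ^ γ) * ENNReal.ofReal (t ^ (-c)) * J := by
          have key : a ^ γ * C ^ γ * a⁻¹ = C ^ γ * t ^ (-c) := by
            have h1 : a ^ γ * a⁻¹ = t ^ (-c) := by
              rw [ha, ← Real.rpow_neg_one (t ^ (-(1/α))), ← Real.rpow_mul ht.le,
                ← Real.rpow_mul ht.le, ← Real.rpow_add ht]
              congr 1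
              rw [hc]
              field_simp
              ring
            calc a ^ γ * C ^ γ * a⁻¹ = (a ^ γ * a⁻¹) * C ^ γ := by ring
              _ = t ^ (-c) * C ^ γ := by rw [h1]
              _ = C ^ γ * t ^ (-c) := by ring
          rw [abs_of_pos (inv_pos.mpr ha0), ← mul_assoc,
            ← ENNReal.ofReal_mul
              (mul_nonneg (Real.rpow_nonneg ha0.le _) (Real.rpow_nonneg hC.le _)),
            key, ENNReal.ofReal_mul (Real.rpow_nonneg hC.le _)]
  -- the inner bound for small s
  set K1 : ℝ≥0∞ := ENNReal.ofReal (2 ^ γ) * 2 * ENNReal.ofReal (C ^ γ) * J with hK1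
  have hK1fin : K1 < ⊤ := by
    rw [hK1]
    exact ENNReal.mul_lt_top
      (ENNReal.mul_lt_top (ENNReal.mul_lt_top ENNReal.ofReal_lt_top (by norm_num))
        ENNReal.ofReal_lt_top) hJfin
  have hsmall : ∀ s ∈ Ioc (0:ℝ) 1,
      (∫⁻ z : ℝ, ENNReal.ofReal (|G (1 + s) z - G s z| ^ γ))
        ≤ K1 * ENNReal.ofReal (s ^ (-c)) := by
    intro s hs
    obtain ⟨hs0, hs1⟩ := hs
    have hpt : ∀ z : ℝ, |G (1 + s) z - G s z| ^ γ ≤ 2 ^ γ * (bnd (1+s) z + bnd s z) := by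
      intro z
      have hb1 := hGbnd (1+s) (by linarith) z
      have hb2 := hGbnd s hs0 z
      have h1 : |G (1 + s) z - G s z| ≤ |G (1+s) z| + |G s z| := abs_sub _ _
      have h2 : |G (1 + s) z - G s z| ^ γ ≤ (|G (1+s) z| + |G s z|) ^ γ :=
        Real.rpow_le_rpow (abs_nonneg _) h1 hγ0.le
      have h3 : (|G (1+s) z| + |G s z|) ^ γ ≤ 2 ^ γ * (|G (1+s) z| ^ γ + |G s z| ^ γ) := by
        rcases le_total (|G (1+s) z|) (|G s z|) with h | h
        · calc (|G (1+s) z| + |G s z|) ^ γ ≤ (2 * |G s z|) ^ γ :=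
              Real.rpow_le_rpow (by positivity) (by linarith) hγ0.le
            _ = 2 ^ γ * |G s z| ^ γ := Real.mul_rpow (by norm_num) (abs_nonneg _)
            _ ≤ 2 ^ γ * (|G (1+s) z| ^ γ + |G s z| ^ γ) := by
                have := Real.rpow_nonneg (abs_nonneg (G (1+s) z)) γ
                nlinarith [Real.rpow_nonneg (by norm_num : (0:ℝ) ≤ 2) γ]
        · calc (|G (1+s) z| + |G s z|) ^ γ ≤ (2 * |G (1+s) z|) ^ γ :=
              Real.rpow_le_rpow (by positivity) (by linarith) hγ0.le
            _ = 2 ^ γ * |G (1+s) z| ^ γ := Real.mul_rpow (by norm_num) (abs_nonneg _)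
            _ ≤ 2 ^ γ * (|G (1+s) z| ^ γ + |G s z| ^ γ) := by
                have := Real.rpow_nonneg (abs_nonneg (G s z)) γ
                nlinarith [Real.rpow_nonneg (by norm_num : (0:ℝ) ≤ 2) γ]
      calc |G (1 + s) z - G s z| ^ γ ≤ (|G (1+s) z| + |G s z|) ^ γ := h2
        _ ≤ 2 ^ γ * (|G (1+s) z| ^ γ + |G s z| ^ γ) := h3
        _ ≤ 2 ^ γ * (bnd (1+s) z + bnd s z) := by
            apply mul_le_mul_of_nonneg_left (add_le_add hb1 hb2)
              (Real.rpow_nonneg (by norm_num) _)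
    calc (∫⁻ z : ℝ, ENNReal.ofReal (|G (1 + s) z - G s z| ^ γ))
        ≤ ∫⁻ z : ℝ, ENNReal.ofReal (2 ^ γ * (bnd (1+s) z + bnd s z)) :=
          lintegral_mono (fun z => ENNReal.ofReal_le_ofReal (hpt z))
      _ = ENNReal.ofReal (2 ^ γ) *
            ∫⁻ z : ℝ, (ENNReal.ofReal (bnd (1+s) z) + ENNReal.ofReal (bnd s z)) := by
          rw [← lintegral_const_mul' _ _ ENNReal.ofReal_ne_top]
          apply lintegral_congr
          intro z
          rw [← ENNReal.ofReal_add (hbnd0 _ z (by linarith)) (hbnd0 _ z hs0),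
            ← ENNReal.ofReal_mul (Real.rpow_nonneg (by norm_num) _)]
      _ = ENNReal.ofReal (2 ^ γ) *
            ((∫⁻ z : ℝ, ENNReal.ofReal (bnd (1+s) z)) + ∫⁻ z : ℝ, ENNReal.ofReal (bnd s z)) := by
          rw [lintegral_add_left (hmeas_bnd (1+s))]
      _ = ENNReal.ofReal (2 ^ γ) *
            (ENNReal.ofReal (C ^ γ) * ENNReal.ofReal ((1+s) ^ (-c)) * J
              + ENNReal.ofReal (C ^ γ) * ENNReal.ofReal (s ^ (-c)) * J) := by
          rw [hbnd_int (1+s) (by linarith), hbnd_int s hs0]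
      _ ≤ ENNReal.ofReal (2 ^ γ) *
            (ENNReal.ofReal (C ^ γ) * ENNReal.ofReal (s ^ (-c)) * J
              + ENNReal.ofReal (C ^ γ) * ENNReal.ofReal (s ^ (-c)) * J) := by
          apply mul_le_mul_right
          apply add_le_add_left
          apply mul_le_mul_left
          apply mul_le_mul_right
          apply ENNReal.ofReal_le_ofReal
          exact Real.rpow_le_rpow_of_nonpos hs0 (by linarith) (by linarith)
      _ = K1 * ENNReal.ofReal (s ^ (-c)) := by
          rw [hK1]; ring
  -- the inner bound for large s
  set K2 : ℝ≥0∞ := ENNReal.ofReal ((2*M) ^ γ) * J2 with hK2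
  have hK2fin : K2 < ⊤ := ENNReal.mul_lt_top ENNReal.ofReal_lt_top hJ2fin
  have hlarge : ∀ s ∈ Ioi (1:ℝ),
      (∫⁻ z : ℝ, ENNReal.ofReal (|G (1 + s) z - G s z| ^ γ))
        ≤ K2 * ENNReal.ofReal (s ^ (-γ)) := by
    intro s hs
    have hs1 : (1:ℝ) ≤ s := le_of_lt hs
    have hs0 : (0:ℝ) < s := by linarith
    have hpt : ∀ z : ℝ, |G (1 + s) z - G s z| ^ γ
        ≤ (2*M) ^ γ * (s ^ (-γ)) * ((1 + |z|) ^ (-γ)) := by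
      intro z
      have hz2 : (0:ℝ) < 1 + |z| := by positivity
      calc |G (1 + s) z - G s z| ^ γ ≤ (2 * M * (s⁻¹ * (1 + |z|)⁻¹)) ^ γ :=
            Real.rpow_le_rpow (abs_nonneg _) (hDlarge s hs1 z) hγ0.le
        _ = (2*M) ^ γ * (s⁻¹) ^ γ * ((1 + |z|)⁻¹) ^ γ := by
            rw [show 2 * M * (s⁻¹ * (1 + |z|)⁻¹) = 2 * M * s⁻¹ * (1 + |z|)⁻¹ from by ring,
              Real.mul_rpow (mul_nonneg (by positivity) (inv_nonneg.mpr hs0.le))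
                (inv_nonneg.mpr hz2.le),
              Real.mul_rpow (by positivity) (inv_nonneg.mpr hs0.le)]
        _ = (2*M) ^ γ * (s ^ (-γ)) * ((1 + |z|) ^ (-γ)) := by
            rw [Real.inv_rpow hs0.le, Real.inv_rpow hz2.le,
              ← Real.rpow_neg hs0.le, ← Real.rpow_neg hz2.le]
    calc (∫⁻ z : ℝ, ENNReal.ofReal (|G (1 + s) z - G s z| ^ γ))
        ≤ ∫⁻ z : ℝ, ENNReal.ofReal ((2*M) ^ γ * (s ^ (-γ)) * ((1 + |z|) ^ (-γ))) :=
          lintegral_mono (fun z => ENNReal.ofReal_le_ofReal (hpt z))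
      _ = ENNReal.ofReal ((2*M) ^ γ * (s ^ (-γ))) * J2 := by
          rw [hJ2, ← lintegral_const_mul' _ _ ENNReal.ofReal_ne_top]
          apply lintegral_congr
          intro z
          rw [← ENNReal.ofReal_mul (by positivity)]
      _ = K2 * ENNReal.ofReal (s ^ (-γ)) := by
          rw [hK2, ENNReal.ofReal_mul (by positivity)]
          ring
  -- assemble
  have hsplit : (∫⁻ s in Set.Ioi (0 : ℝ), ∫⁻ z : ℝ,
      ENNReal.ofReal (|G (1 + s) z - G s z| ^ γ))
      = (∫⁻ s in Ioc (0:ℝ) 1, ∫⁻ z : ℝ, ENNReal.ofReal (|G (1 + s) z - G s z| ^ γ))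
        + ∫⁻ s in Ioi (1:ℝ), ∫⁻ z : ℝ, ENNReal.ofReal (|G (1 + s) z - G s z| ^ γ) := by
    rw [← Ioc_union_Ioi_eq_Ioi (zero_le_one (α := ℝ)),
      lintegral_union measurableSet_Ioi Ioc_disjoint_Ioi_same]
  rw [hsplit]
  have hpart1 : (∫⁻ s in Ioc (0:ℝ) 1, ∫⁻ z : ℝ,
      ENNReal.ofReal (|G (1 + s) z - G s z| ^ γ)) < ⊤ := by
    have hb : (∫⁻ s in Ioc (0:ℝ) 1, ∫⁻ z : ℝ,
        ENNReal.ofReal (|G (1 + s) z - G s z| ^ γ))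
        ≤ ∫⁻ s in Ioc (0:ℝ) 1, K1 * ENNReal.ofReal (s ^ (-c)) :=
      lintegral_mono_ae ((ae_restrict_iff' measurableSet_Ioc).mpr (ae_of_all _ hsmall))
    have hfin : (∫⁻ s in Ioc (0:ℝ) 1, ENNReal.ofReal (s ^ (-c))) < ⊤ := by
      have hint : IntegrableOn (fun s : ℝ => s ^ (-c)) (Ioc 0 1) := by
        have := intervalIntegral.intervalIntegrable_rpow' (a := 0) (b := 1) (r := -c) (by linarith)
        rwa [intervalIntegrable_iff_integrableOn_Ioc_of_le zero_le_one] at this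
      exact hint.lintegral_lt_top
    calc (∫⁻ s in Ioc (0:ℝ) 1, ∫⁻ z : ℝ, ENNReal.ofReal (|G (1 + s) z - G s z| ^ γ))
        ≤ ∫⁻ s in Ioc (0:ℝ) 1, K1 * ENNReal.ofReal (s ^ (-c)) := hb
      _ = K1 * ∫⁻ s in Ioc (0:ℝ) 1, ENNReal.ofReal (s ^ (-c)) :=
          lintegral_const_mul' _ _ hK1fin.ne
      _ < ⊤ := ENNReal.mul_lt_top hK1fin hfin
  have hpart2 : (∫⁻ s in Ioi (1:ℝ), ∫⁻ z : ℝ,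
      ENNReal.ofReal (|G (1 + s) z - G s z| ^ γ)) < ⊤ := by
    have hb : (∫⁻ s in Ioi (1:ℝ), ∫⁻ z : ℝ,
        ENNReal.ofReal (|G (1 + s) z - G s z| ^ γ))
        ≤ ∫⁻ s in Ioi (1:ℝ), K2 * ENNReal.ofReal (s ^ (-γ)) :=
      lintegral_mono_ae ((ae_restrict_iff' measurableSet_Ioi).mpr (ae_of_all _ hlarge))
    have hfin : (∫⁻ s in Ioi (1:ℝ), ENNReal.ofReal (s ^ (-γ))) < ⊤ := by
      have hint : IntegrableOn (fun s : ℝ => s ^ (-γ)) (Ioi 1) :=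
        integrableOn_Ioi_rpow_of_lt (by linarith) one_pos
      exact hint.lintegral_lt_top
    calc (∫⁻ s in Ioi (1:ℝ), ∫⁻ z : ℝ, ENNReal.ofReal (|G (1 + s) z - G s z| ^ γ))
        ≤ ∫⁻ s in Ioi (1:ℝ), K2 * ENNReal.ofReal (s ^ (-γ)) := hb
      _ = K2 * ∫⁻ s in Ioi (1:ℝ), ENNReal.ofReal (s ^ (-γ)) :=
          lintegral_const_mul' _ _ hK2fin.ne
      _ < ⊤ := ENNReal.mul_lt_top hK2fin hfin
  exact ENNReal.add_lt_top.mpr ⟨hpart1, hpart2⟩
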